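/- Let M, N be positive natural numbers and let d be a dataset of N instances with M binary protected attributes and a binary label. Suppose every vertex (level-0 hypercube) contains at least one instance. Then the worst-case statistical parity SP(K) = SR_max(K) − SR_min(K) is monotonically decreasing in the level K: for every K with 1 ≤ K ≤ M, SP(K) ≤ SP(K-1). -/

import Mathlib

/-- An attribute vector `v` belongs to the hypercube `x` if it matches all specified coordinates. -/
def Belongs {M : ℕ} (x : Fin M → Option Bool) (v : Fin M → Bool) : Prop :=
  ∀ i : Fin M, ∀ b : Bool, x i = some b → v i = b

instance {M : ℕ} (x : Fin M → Option Bool) (v : Fin M → Bool) : Decidable (Belongs x v) := by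
  unfold Belongs; infer_instance

/-- The level of a hypercube: the number of its stars (unspecified coordinates). -/
def level {M : ℕ} (x : Fin M → Option Bool) : ℕ :=
  (Finset.univ.filter fun i => x i = none).card

/-- `cnt d x` = N(x): the number of instances of the dataset `d` belonging to `x`. -/
def cnt {M N : ℕ} (d : Fin N → (Fin M → Bool) × Bool) (x : Fin M → Option Bool) : ℕ :=
  (Finset.univ.filter fun n => Belongs x (d n).1).card

/-- `cnt1 d x` = N¹(x): the number of instances belonging to `x` with label `true`. -/
def cnt1 {M N : ℕ} (d : Fin N → (Fin M → Bool) × Bool) (x : Fin M → Option Bool) : ℕ :=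
  (Finset.univ.filter fun n => Belongs x (d n).1 ∧ (d n).2 = true).card

/-- The success rate SR(x) = N¹(x)/N(x). -/
def SR {M N : ℕ} (d : Fin N → (Fin M → Bool) × Bool) (x : Fin M → Option Bool) : ℚ :=
  (cnt1 d x : ℚ) / (cnt d x : ℚ)

/-- The finset of all hypercubes of level `K`. -/
def levelSet (M K : ℕ) : Finset (Fin M → Option Bool) :=
  Finset.univ.filter fun x => level x = K

/-- SR_min(K): minimum success rate over all hypercubes of level `K`
(the level set is nonempty whenever `K ≤ M`, so the junk value `0` is never used there). -/
def SRmin {M N : ℕ} (d : Fin N → (Fin M → Bool) × Bool) (K : ℕ) : ℚ :=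
  (((levelSet M K).image (SR d)).min).untopD 0

/-- SR_max(K): maximum success rate over all hypercubes of level `K`. -/
def SRmax {M N : ℕ} (d : Fin N → (Fin M → Bool) × Bool) (K : ℕ) : ℚ :=
  (((levelSet M K).image (SR d)).max).unbotD 0

/-- The worst-case statistical parity at level K. -/
def SP {M N : ℕ} (d : Fin N → (Fin M → Bool) × Bool) (K : ℕ) : ℚ :=
  SRmax d K - SRmin d K

-- auxiliary lemmas

lemma belongs_update_iff {M : ℕ} (x : Fin M → Option Bool) (i : Fin M) (hi : x i = none)
    (b : Bool) (v : Fin M → Bool) :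
    Belongs (Function.update x i (some b)) v ↔ Belongs x v ∧ v i = b := by
  constructor
  · intro h
    refine ⟨fun j b' hj => ?_, h i b (by simp)⟩
    have hji : j ≠ i := by rintro rfl; rw [hi] at hj; cases hj
    exact h j b' (by rwa [Function.update_of_ne hji])
  · rintro ⟨h1, h2⟩ j b' hj
    rcases eq_or_ne j i with rfl | hji
    · rw [Function.update_self] at hj; cases hj; exact h2
    · rw [Function.update_of_ne hji] at hj; exact h1 j b' hj

lemma card_split {N : ℕ} (P : Fin N → Prop) [DecidablePred P] (Q : Fin N → Bool) :
    (Finset.univ.filter P).card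
      = (Finset.univ.filter fun n => P n ∧ Q n = false).card
      + (Finset.univ.filter fun n => P n ∧ Q n = true).card := by
  rw [← Finset.filter_filter, ← Finset.filter_filter,
    Finset.card_filter_add_card_filter_not (s := Finset.univ.filter P)
      (p := fun n => Q n = false) |>.symm]
  have : (Finset.filter (fun a => ¬Q a = false) (Finset.filter P Finset.univ))
      = Finset.filter (fun n => Q n = true) (Finset.filter P Finset.univ) :=
    Finset.filter_congr (by intro n _; simp)
  rw [this]

lemma cnt_split {M N : ℕ} (d : Fin N → (Fin M → Bool) × Bool) (x : Fin M → Option Bool)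
    (i : Fin M) (hi : x i = none) :
    cnt d x = cnt d (Function.update x i (some false)) + cnt d (Function.update x i (some true)) := by
  unfold cnt
  have h0 : ∀ b : Bool, (Finset.univ.filter fun n => Belongs (Function.update x i (some b)) (d n).1)
      = Finset.univ.filter fun n => Belongs x (d n).1 ∧ (d n).1 i = b := by
    intro b
    apply Finset.filter_congr
    intro n _
    simp [belongs_update_iff x i hi b]
  rw [h0 false, h0 true]
  exact card_split _ _

lemma cnt1_split {M N : ℕ} (d : Fin N → (Fin M → Bool) × Bool) (x : Fin M → Option Bool)
    (i : Fin M) (hi : x i = none) :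
    cnt1 d x = cnt1 d (Function.update x i (some false)) + cnt1 d (Function.update x i (some true)) := by
  unfold cnt1
  have h0 : ∀ b : Bool, (Finset.univ.filter fun n =>
        Belongs (Function.update x i (some b)) (d n).1 ∧ (d n).2 = true)
      = Finset.univ.filter fun n => (Belongs x (d n).1 ∧ (d n).2 = true) ∧ (d n).1 i = b := by
    intro b
    apply Finset.filter_congr
    intro n _
    simp only [belongs_update_iff x i hi b]
    tauto
  rw [h0 false, h0 true]
  exact card_split _ _

lemma level_update {M : ℕ} (x : Fin M → Option Bool) (i : Fin M) (hi : x i = none) (b : Bool) :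
    level (Function.update x i (some b)) = level x - 1 := by
  unfold level
  have h : (Finset.univ.filter fun j => Function.update x i (some b) j = none)
      = (Finset.univ.filter fun j => x j = none).erase i := by
    ext j
    simp only [Finset.mem_filter, Finset.mem_univ, true_and, Finset.mem_erase]
    rcases eq_or_ne j i with rfl | hji
    · simp
    · simp [Function.update_of_ne hji, hji]
  rw [h, Finset.card_erase_of_mem (by simp [hi])]

lemma cnt_pos {M N : ℕ} (d : Fin N → (Fin M → Bool) × Bool)
    (hvert : ∀ v : Fin M → Bool, 0 < cnt d (fun i => some (v i)))
    (x : Fin M → Option Bool) : 0 < cnt d x := by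
  set v : Fin M → Bool := fun i => (x i).getD true with hv
  have h := hvert v
  refine lt_of_lt_of_le h ?_
  unfold cnt
  apply Finset.card_le_card
  intro n hn
  simp only [Finset.mem_filter, Finset.mem_univ, true_and] at hn ⊢
  intro i b hib
  have := hn i (v i) rfl
  rw [this, hv]
  simp [hib]

lemma levelSet_nonempty (M K : ℕ) (h : K ≤ M) : (levelSet M K).Nonempty := by
  refine ⟨fun i => if (i : ℕ) < K then none else some true, ?_⟩
  simp only [levelSet, Finset.mem_filter, Finset.mem_univ, true_and]; simp only [level]
  have heq : (Finset.univ.filter fun i : Fin M =>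
      (if (i : ℕ) < K then none else some true : Option Bool) = none)
      = Finset.univ.filter fun i : Fin M => (i:ℕ) < K := by
    apply Finset.filter_congr
    intro i _
    by_cases hi : (i:ℕ) < K <;> simp [hi]
  rw [heq]
  have : (Finset.univ.filter fun i : Fin M => (i:ℕ) < K)
      = Finset.map (Fin.castLEEmb h) Finset.univ := by
    ext i
    simp only [Finset.mem_filter, Finset.mem_univ, true_and, Finset.mem_map, Fin.castLEEmb_apply]
    constructor
    · intro hi; exact ⟨⟨i, hi⟩, rfl⟩
    · rintro ⟨j, rfl⟩; exact j.isLt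
  simp [this]

lemma mediant_le {a b c e m : ℚ} (hc : 0 < c) (he : 0 < e) (h1 : a / c ≤ m) (h2 : b / e ≤ m) :
    (a + b) / (c + e) ≤ m := by
  rw [div_le_iff₀ hc] at h1
  rw [div_le_iff₀ he] at h2
  rw [div_le_iff₀ (by linarith)]
  nlinarith

lemma le_mediant {a b c e m : ℚ} (hc : 0 < c) (he : 0 < e) (h1 : m ≤ a / c) (h2 : m ≤ b / e) :
    m ≤ (a + b) / (c + e) := by
  rw [le_div_iff₀ hc] at h1
  rw [le_div_iff₀ he] at h2
  rw [le_div_iff₀ (by linarith)]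
  nlinarith

/-- If every vertex contains at least one instance, the worst-case statistical
parity is monotonically decreasing in the level. -/
theorem SP_anti (M N : ℕ) (hM : 0 < M) (hN : 0 < N)
    (d : Fin N → (Fin M → Bool) × Bool)
    (hvert : ∀ v : Fin M → Bool, 0 < cnt d (fun i => some (v i)))
    (K : ℕ) (hK1 : 1 ≤ K) (hKM : K ≤ M) :
    SP d K ≤ SP d (K - 1) := by

  have hK1M : K - 1 ≤ M := le_trans (Nat.sub_le K 1) hKM
  have hneK : ((levelSet M K).image (SR d)).Nonempty :=
    (levelSet_nonempty M K hKM).image _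
  have hneK1 : ((levelSet M (K - 1)).image (SR d)).Nonempty :=
    (levelSet_nonempty M (K - 1) hK1M).image _
  have hmaxK : SRmax d K = ((levelSet M K).image (SR d)).max' hneK := by
    rw [SRmax, ← Finset.coe_max' hneK]; rfl
  have hmaxK1 : SRmax d (K - 1) = ((levelSet M (K - 1)).image (SR d)).max' hneK1 := by
    rw [SRmax, ← Finset.coe_max' hneK1]; rfl
  have hminK : SRmin d K = ((levelSet M K).image (SR d)).min' hneK := by
    rw [SRmin, ← Finset.coe_min' hneK]; rfl
  have hminK1 : SRmin d (K - 1) = ((levelSet M (K - 1)).image (SR d)).min' hneK1 := by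
    rw [SRmin, ← Finset.coe_min' hneK1]; rfl
  -- the splitting data for each level-K hypercube
  have key : ∀ y ∈ (levelSet M K).image (SR d),
      ∃ z0 ∈ (levelSet M (K - 1)).image (SR d), ∃ z1 ∈ (levelSet M (K - 1)).image (SR d),
      ∃ a b c e : ℚ, 0 < c ∧ 0 < e ∧ z0 = a / c ∧ z1 = b / e ∧ y = (a + b) / (c + e) := by
    intro y hy
    obtain ⟨x, hx, rfl⟩ := Finset.mem_image.mp hy
    have hlx : level x = K := (Finset.mem_filter.mp hx).2
    have hstar : ∃ i, x i = none := by
      have hc : 0 < (Finset.univ.filter fun i => x i = none).card := by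
        show 0 < level x
        omega
      obtain ⟨i, hi⟩ := Finset.card_pos.mp hc
      exact ⟨i, (Finset.mem_filter.mp hi).2⟩
    obtain ⟨i, hi⟩ := hstar
    set x0 := Function.update x i (some false) with hx0
    set x1 := Function.update x i (some true) with hx1
    have h0 : x0 ∈ levelSet M (K - 1) := by
      simp only [levelSet, Finset.mem_filter, Finset.mem_univ, true_and]
      rw [hx0, level_update x i hi, hlx]
    have h1 : x1 ∈ levelSet M (K - 1) := by
      simp only [levelSet, Finset.mem_filter, Finset.mem_univ, true_and]
      rw [hx1, level_update x i hi, hlx]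
    refine ⟨SR d x0, Finset.mem_image_of_mem _ h0, SR d x1, Finset.mem_image_of_mem _ h1,
      (cnt1 d x0 : ℚ), (cnt1 d x1 : ℚ), (cnt d x0 : ℚ), (cnt d x1 : ℚ),
      by exact_mod_cast cnt_pos d hvert x0, by exact_mod_cast cnt_pos d hvert x1,
      rfl, rfl, ?_⟩
    rw [SR, cnt_split d x i hi, cnt1_split d x i hi]
    push_cast
    rfl
  have hmax : SRmax d K ≤ SRmax d (K - 1) := by
    rw [hmaxK, hmaxK1]
    apply Finset.max'_le
    intro y hy
    obtain ⟨z0, hz0, z1, hz1, a, b, c, e, hc, he, rfl, rfl, rfl⟩ := key y hy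
    exact mediant_le hc he (Finset.le_max' _ _ hz0) (Finset.le_max' _ _ hz1)
  have hmin : SRmin d (K - 1) ≤ SRmin d K := by
    rw [hminK, hminK1]
    apply Finset.le_min'
    intro y hy
    obtain ⟨z0, hz0, z1, hz1, a, b, c, e, hc, he, rfl, rfl, rfl⟩ := key y hy
    exact le_mediant hc he (Finset.min'_le _ _ hz0) (Finset.min'_le _ _ hz1)
  simp only [SP]
  linarith
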